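/- Let R be a commutative Noetherian ring and M a finitely generated R-module that is faithful and reflexive. Then the assignment sending an endomorphism g of the trace ideal τ(M) to the unique endomorphism f of M satisfying α(f(m)) = g(α(m)) for all α ∈ Hom_R(M,R) and all m ∈ M is an isomorphism of R-algebras from End_R(τ(M)) onto the center of End_R(M). -/

import Mathlib

universe u v

/-- The trace ideal of a module: the ideal generated by all images of maps `M →ₗ[R] R`. -/
def traceIdeal (R : Type u) (M : Type v) [CommRing R] [AddCommGroup M] [Module R M] :
    Ideal R :=
  ⨆ f : M →ₗ[R] R, LinearMap.range f

theorem apply_mem_traceIdeal {R : Type u} {M : Type v} [CommRing R] [AddCommGroup M]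
    [Module R M] (f : M →ₗ[R] R) (m : M) : f m ∈ traceIdeal R M :=
  Submodule.mem_iSup_of_mem f (LinearMap.mem_range_self f m)

namespace TraceAux

variable {R : Type u} {M : Type v} [CommRing R] [AddCommGroup M] [Module R M]

/-- Corestriction of a functional to the trace ideal. -/
def cores (α : M →ₗ[R] R) : M →ₗ[R] traceIdeal R M :=
  α.codRestrict (traceIdeal R M) (apply_mem_traceIdeal α)

@[simp] lemma cores_apply (α : M →ₗ[R] R) (m : M) :
    cores α m = ⟨α m, apply_mem_traceIdeal α m⟩ := rfl

/-- The induced endomorphism of the dual, `α ↦ g ∘ α`. -/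
def G (g : Module.End R (traceIdeal R M)) : Module.Dual R M →ₗ[R] Module.Dual R M where
  toFun α := (traceIdeal R M).subtype ∘ₗ (g ∘ₗ cores α)
  map_add' α β := by
    ext m
    simp only [LinearMap.comp_apply, LinearMap.add_apply, Submodule.coe_subtype]
    have h : cores (α + β) m = cores α m + cores β m := Subtype.ext (by simp)
    rw [h, map_add, Submodule.coe_add]
  map_smul' r α := by
    ext m
    simp only [LinearMap.comp_apply, LinearMap.smul_apply, Submodule.coe_subtype,
      RingHom.id_apply]
    have h : cores (r • α) m = r • cores α m := Subtype.ext (by simp)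
    rw [h, map_smul, Submodule.coe_smul, smul_eq_mul]

@[simp] lemma G_apply (g : Module.End R (traceIdeal R M)) (α : M →ₗ[R] R) (m : M) :
    G g α m = (g ⟨α m, apply_mem_traceIdeal α m⟩ : R) := rfl

variable [Module.IsReflexive R M]

/-- If all functionals agree on two endomorphisms, they are equal. -/
lemma dual_inj {x y : M} (h : ∀ α : M →ₗ[R] R, α x = α y) : x = y := by
  apply (Module.evalEquiv R M).injective
  ext α
  simpa using h α

/-- The endomorphism of `M` induced by an endomorphism of the trace ideal. -/
noncomputable def Phi0 (g : Module.End R (traceIdeal R M)) : Module.End R M :=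
  ((Module.evalEquiv R M).symm.toLinearMap ∘ₗ (G g).dualMap) ∘ₗ
    (Module.evalEquiv R M).toLinearMap

lemma Phi0_spec (g : Module.End R (traceIdeal R M)) (α : M →ₗ[R] R) (m : M) :
    α (Phi0 g m) = (g ⟨α m, apply_mem_traceIdeal α m⟩ : R) := by
  simp [Phi0, Module.apply_evalEquiv_symm_apply]

lemma Phi0_unique (g : Module.End R (traceIdeal R M)) (f : Module.End R M)
    (h : ∀ (α : M →ₗ[R] R) (m : M), α (f m) = (g ⟨α m, apply_mem_traceIdeal α m⟩ : R)) :
    f = Phi0 g := by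
  ext m
  exact dual_inj fun α => by rw [h, Phi0_spec]

/-- Endomorphisms of the trace ideal agreeing on the generators `α m` are equal. -/
lemma end_ext {g g' : Module.End R (traceIdeal R M)}
    (h : ∀ (α : M →ₗ[R] R) (m : M),
      g ⟨α m, apply_mem_traceIdeal α m⟩ = g' ⟨α m, apply_mem_traceIdeal α m⟩) : g = g' := by
  ext ⟨a, ha⟩
  refine Submodule.iSup_induction' (motive := fun a ha => (g ⟨a, ha⟩ : R) = (g' ⟨a, ha⟩ : R)) _
    (fun α a ha' => ?_) ?_ (fun x y hx hy hgx hgy => ?_) ha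
  · obtain ⟨m, rfl⟩ := ha'
    exact congrArg Subtype.val (h α m)
  · have h0 : (⟨0, (traceIdeal R M).zero_mem⟩ : traceIdeal R M) = 0 := rfl
    simp [h0]
  · have hadd : (⟨x + y, Submodule.add_mem _ hx hy⟩ : traceIdeal R M) = ⟨x, hx⟩ + ⟨y, hy⟩ := rfl
    simp only [hadd, map_add, Submodule.coe_add, hgx, hgy]


section Surj

variable (hfaithful : Module.annihilator R M = ⊥)

include hfaithful in
/-- An element of `R` killing the trace ideal is zero (faithful + reflexive). -/
lemma ann_trace (r : R) (h : ∀ (α : M →ₗ[R] R) (m : M), r * α m = 0) : r = 0 := by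
  have hm : ∀ m : M, r • m = 0 := fun m => by
    apply dual_inj (R := R) (fun α => ?_)
    simpa [smul_eq_mul] using h α m
  have : r ∈ Module.annihilator R M := by
    rw [Module.mem_annihilator]; exact hm
  simpa [hfaithful] using this

variable {f : Module.End R M} (hf : f ∈ Subalgebra.center R (Module.End R M))

include hf in
lemma central_key (α : M →ₗ[R] R) (m : M) (β : M →ₗ[R] R) (n : M) :
    α (f m) * β n = α m * β (f n) := by
  have hc := (Subalgebra.mem_center_iff.mp hf) (α.smulRight n)
  have := congrFun (congrArg DFunLike.coe hc) m
  have h2 : α (f m) • n = α m • f n := by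
    simpa [Module.End.mul_apply, map_smul] using this
  calc α (f m) * β n = β (α (f m) • n) := by rw [map_smul]; simp [smul_eq_mul]
    _ = β (α m • f n) := by rw [h2]
    _ = α m * β (f n) := by rw [map_smul]; simp [smul_eq_mul]

/-- The sum map `(Dual →₀ M) → R`, `x ↦ Σ α (x α)`. -/
noncomputable def pmap : ((M →ₗ[R] R) →₀ M) →ₗ[R] R :=
  Finsupp.lsum ℕ (fun α => α)

/-- The twisted sum map `x ↦ Σ α (f (x α))`. -/
noncomputable def qmap (f : Module.End R M) : ((M →ₗ[R] R) →₀ M) →ₗ[R] R :=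
  Finsupp.lsum ℕ (fun α => α ∘ₗ f)

lemma pmap_single (α : M →ₗ[R] R) (m : M) : pmap (Finsupp.single α m) = α m := by
  simp [pmap]

lemma qmap_single (f : Module.End R M) (α : M →ₗ[R] R) (m : M) :
    qmap f (Finsupp.single α m) = α (f m) := by
  simp [qmap]

lemma range_pmap : LinearMap.range (pmap (R := R) (M := M)) = traceIdeal R M := by
  apply le_antisymm
  · rintro _ ⟨x, rfl⟩
    have : pmap x = x.sum fun α m => α m := by simp [pmap, Finsupp.lsum_apply]
    rw [this]
    exact Submodule.sum_mem _ fun α _ => apply_mem_traceIdeal α (x α)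
  · refine iSup_le fun α => ?_
    rintro _ ⟨m, rfl⟩
    exact ⟨Finsupp.single α m, pmap_single α m⟩

include hfaithful hf in
lemma ker_le : LinearMap.ker (pmap (R := R) (M := M)) ≤ LinearMap.ker (qmap f) := by
  intro x hx
  rw [LinearMap.mem_ker] at hx ⊢
  apply ann_trace hfaithful
  intro β n
  have hq : qmap f x = x.sum fun α m => α (f m) := Finsupp.lsum_apply _ _ x
  have hp : pmap (R := R) (M := M) x = x.sum fun α m => α m := Finsupp.lsum_apply _ _ x
  have h1 : qmap f x * β n = pmap x * β (f n) := by
    rw [hq, hp]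
    simp only [Finsupp.sum, Finset.sum_mul]
    exact Finset.sum_congr rfl fun α _ => central_key hf α (x α) β n
  rw [h1, hx, zero_mul]

/-- The linear map `τ(M) → R` induced by a central endomorphism. -/
noncomputable def g0 : traceIdeal R M →ₗ[R] R :=
  ((LinearMap.ker (pmap (R := R) (M := M))).liftQ (qmap f) (ker_le hfaithful hf)) ∘ₗ
    ((pmap (R := R) (M := M)).quotKerEquivRange.symm.toLinearMap ∘ₗ
      (LinearEquiv.ofEq _ _ (range_pmap (R := R) (M := M)).symm).toLinearMap)

lemma g0_spec (α : M →ₗ[R] R) (m : M) :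
    g0 hfaithful hf ⟨α m, apply_mem_traceIdeal α m⟩ = α (f m) := by
  have h1 : (LinearEquiv.ofEq _ _ (range_pmap (R := R) (M := M)).symm)
      ⟨α m, apply_mem_traceIdeal α m⟩
      = ⟨pmap (Finsupp.single α m), LinearMap.mem_range_self _ _⟩ :=
    Subtype.ext (by simp [pmap_single])
  rw [g0, LinearMap.comp_apply, LinearMap.comp_apply, LinearEquiv.coe_coe,
    LinearEquiv.coe_coe, h1, LinearMap.quotKerEquivRange_symm_apply_image]
  simpa using qmap_single f α m

lemma g0_mem (a : traceIdeal R M) : g0 hfaithful hf a ∈ traceIdeal R M := by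
  obtain ⟨a, ha⟩ := a
  refine Submodule.iSup_induction'
    (motive := fun a ha => g0 hfaithful hf ⟨a, ha⟩ ∈ traceIdeal R M) _
    (fun α a ha' => ?_) ?_ (fun x y hx hy hgx hgy => ?_) ha
  · obtain ⟨m, rfl⟩ := ha'
    rw [g0_spec hfaithful hf]
    exact apply_mem_traceIdeal (α ∘ₗ f) m
  · have h0 : (⟨0, (traceIdeal R M).zero_mem⟩ : traceIdeal R M) = 0 := rfl
    simp only [h0, map_zero]
    exact Submodule.zero_mem _
  · have hadd : (⟨x + y, Submodule.add_mem _ hx hy⟩ : traceIdeal R M) = ⟨x, hx⟩ + ⟨y, hy⟩ := rfl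
    simp only [hadd, map_add]
    exact Submodule.add_mem _ hgx hgy

/-- The endomorphism of the trace ideal induced by a central endomorphism. -/
noncomputable def g1 : Module.End R (traceIdeal R M) :=
  (g0 hfaithful hf).codRestrict (traceIdeal R M) (g0_mem hfaithful hf)

lemma g1_spec (α : M →ₗ[R] R) (m : M) :
    (g1 hfaithful hf ⟨α m, apply_mem_traceIdeal α m⟩ : R) = α (f m) :=
  g0_spec hfaithful hf α m

end Surj

/-- The map `g ↦ Φ₀(g)` as an algebra homomorphism. -/
noncomputable def PhiAlg : Module.End R (traceIdeal R M) →ₐ[R] Module.End R M where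
  toFun := Phi0
  map_one' := (Phi0_unique 1 1 fun _ _ => rfl).symm
  map_mul' g g' := by
    refine (Phi0_unique (g * g') (Phi0 g * Phi0 g') fun α m => ?_).symm
    have h1 : (⟨α (Phi0 g' m), apply_mem_traceIdeal α (Phi0 g' m)⟩ : traceIdeal R M)
        = g' ⟨α m, apply_mem_traceIdeal α m⟩ := Subtype.ext (Phi0_spec g' α m)
    calc α ((Phi0 g * Phi0 g') m) = α (Phi0 g (Phi0 g' m)) := rfl
      _ = (g ⟨α (Phi0 g' m), apply_mem_traceIdeal α _⟩ : R) := Phi0_spec g α _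
      _ = (g (g' ⟨α m, apply_mem_traceIdeal α m⟩) : R) := by rw [h1]
      _ = ((g * g') ⟨α m, apply_mem_traceIdeal α m⟩ : R) := rfl
  map_zero' := (Phi0_unique 0 0 fun α m => by simp).symm
  map_add' g g' := by
    refine (Phi0_unique (g + g') (Phi0 g + Phi0 g') fun α m => ?_).symm
    calc α ((Phi0 g + Phi0 g') m) = α (Phi0 g m) + α (Phi0 g' m) := by
          simp [LinearMap.add_apply]
      _ = (g ⟨α m, apply_mem_traceIdeal α m⟩ : R) + (g' ⟨α m, apply_mem_traceIdeal α m⟩ : R) := by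
          rw [Phi0_spec, Phi0_spec]
      _ = ((g + g') ⟨α m, apply_mem_traceIdeal α m⟩ : R) := rfl
  commutes' r := by
    refine (Phi0_unique (algebraMap R _ r) (algebraMap R (Module.End R M) r)
      fun α m => ?_).symm
    simp only [Module.algebraMap_end_apply, map_smul, smul_eq_mul]
    rfl

lemma Phi0_central (g : Module.End R (traceIdeal R M)) :
    Phi0 g ∈ Subalgebra.center R (Module.End R M) := by
  rw [Subalgebra.mem_center_iff]
  intro h
  ext m
  refine dual_inj (R := R) fun α => ?_
  calc α ((h * Phi0 g) m) = (α ∘ₗ h) (Phi0 g m) := rfl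
    _ = (g ⟨(α ∘ₗ h) m, apply_mem_traceIdeal (α ∘ₗ h) m⟩ : R) := Phi0_spec g (α ∘ₗ h) m
    _ = (g ⟨α (h m), apply_mem_traceIdeal α (h m)⟩ : R) := rfl
    _ = α (Phi0 g (h m)) := (Phi0_spec g α (h m)).symm
    _ = α ((Phi0 g * h) m) := rfl

lemma Phi0_inj {g g' : Module.End R (traceIdeal R M)} (h : Phi0 g = Phi0 g') : g = g' :=
  end_ext fun α m => Subtype.ext (by rw [← Phi0_spec g α m, ← Phi0_spec g' α m, h])

lemma Phi0_g1 (hfaithful : Module.annihilator R M = ⊥) {f : Module.End R M}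
    (hf : f ∈ Subalgebra.center R (Module.End R M)) : Phi0 (g1 hfaithful hf) = f :=
  (Phi0_unique _ f fun α m => (g1_spec hfaithful hf α m).symm).symm

end TraceAux

/-- Let `R` be a commutative Noetherian ring and `M` a finitely generated `R`-module that is
faithful and reflexive.  Then the assignment sending an endomorphism `g` of the trace ideal
`τ(M)` to the unique endomorphism `f` of `M` satisfying `α (f m) = g (α m)` for all
`α ∈ Hom_R(M,R)` and `m ∈ M` is an isomorphism of `R`-algebras from `End_R(τ(M))` onto the
center of `End_R(M)`. -/
theorem trace_end_iso_center (R : Type u) (M : Type v) [CommRing R] [IsNoetherianRing R]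
    [AddCommGroup M] [Module R M] [Module.Finite R M]
    (hfaithful : Module.annihilator R M = ⊥) [Module.IsReflexive R M] :
    (∀ g : Module.End R (traceIdeal R M), ∃! f : Module.End R M,
      ∀ (α : M →ₗ[R] R) (m : M),
        α (f m) = (g ⟨α m, apply_mem_traceIdeal α m⟩ : R)) ∧
    ∃ e : Module.End R (traceIdeal R M) ≃ₐ[R] Subalgebra.center R (Module.End R M),
      ∀ (g : Module.End R (traceIdeal R M)) (α : M →ₗ[R] R) (m : M),
        α ((e g : Module.End R M) m) = (g ⟨α m, apply_mem_traceIdeal α m⟩ : R) := by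
  refine ⟨fun g => ⟨TraceAux.Phi0 g, TraceAux.Phi0_spec g,
    fun f hf => TraceAux.Phi0_unique g f hf⟩, ?_⟩
  let Φ := (TraceAux.PhiAlg (R := R) (M := M)).codRestrict
      (Subalgebra.center R (Module.End R M)) TraceAux.Phi0_central
  have hbij : Function.Bijective Φ := by
    constructor
    · intro g g' h
      exact TraceAux.Phi0_inj (congrArg Subtype.val h)
    · rintro ⟨f, hf⟩
      exact ⟨TraceAux.g1 hfaithful hf, Subtype.ext (TraceAux.Phi0_g1 hfaithful hf)⟩
  exact ⟨AlgEquiv.ofBijective Φ hbij, fun g α m => TraceAux.Phi0_spec g α m⟩
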